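/- Let X be a real Banach space and Y a proper closed subspace of X that is an M-ideal in X, so that X* = Y^⊥ ⊕₁ Z, i.e., there is a bounded linear projection P : X* → X* with range Y^⊥, kernel Z, and ‖F‖ = ‖P(F)‖ + ‖F − P(F)‖ for all F ∈ X*. If Z is a norming subspace of X*, i.e., ‖x‖ = sup{|F(x)| : F ∈ Z, ‖F‖ ≤ 1} for every x ∈ X, then both X and Y have the strong diameter two property. -/

import Mathlib

open NormedSpace Metric Set

set_option maxHeartbeats 1600000
set_option maxSynthPendingDepth 2
set_option synthInstance.maxHeartbeats 400000

/-- A real normed space `E` has the strong diameter two property (SD2P) if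
every convex combination of slices of the unit ball has diameter two. -/
def HasSD2P (E : Type*) [NormedAddCommGroup E] [NormedSpace ℝ E] : Prop :=
  ∀ n : ℕ, 0 < n →
    ∀ (f : Fin n → StrongDual ℝ E) (e l : Fin n → ℝ),
      (∀ i, ‖f i‖ = 1) → (∀ i, 0 < e i) → (∀ i, 0 ≤ l i) → (∑ i, l i) = 1 →
      Metric.diam {z : E | ∃ g : Fin n → E,
        (∀ i, ‖g i‖ ≤ 1 ∧ f i (g i) > 1 - e i) ∧ z = ∑ i, l i • g i} = 2

section MIdealProof

variable {X : Type*} [NormedAddCommGroup X] [NormedSpace ℝ X]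

private lemma mem_ann_iff {Y : Subspace ℝ X} {P : StrongDual ℝ X →L[ℝ] StrongDual ℝ X}
    (hproj : ∀ F, P (P F) = P F)
    (hrange : Set.range (fun F => P F) = {F : StrongDual ℝ X | ∀ y ∈ Y, F y = 0})
    (F : StrongDual ℝ X) : (∀ y ∈ Y, F y = 0) ↔ P F = F := by
  constructor
  · intro h
    have h2 : F ∈ Set.range (fun F => P F) := by rw [hrange]; exact h
    obtain ⟨F', hF'⟩ := h2
    rw [← hF', hproj]
  · intro h y hy
    have h2 : F ∈ {F : StrongDual ℝ X | ∀ y ∈ Y, F y = 0} := by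
      rw [← hrange]; exact ⟨F, h⟩
    exact h2 y hy

private lemma res_norm_le (Y : Subspace ℝ X) (f : StrongDual ℝ X) :
    ‖f.comp Y.subtypeL‖ ≤ ‖f‖ := by
  refine ContinuousLinearMap.opNorm_le_bound _ (norm_nonneg f) (fun y => ?_)
  have h := f.le_opNorm (y : X)
  calc ‖(f.comp Y.subtypeL) y‖ = ‖f (y : X)‖ := rfl
    _ ≤ ‖f‖ * ‖(y : X)‖ := h
    _ = ‖f‖ * ‖y‖ := by rw [Submodule.norm_coe]

private lemma res_norm_eq {Y : Subspace ℝ X} {P : StrongDual ℝ X →L[ℝ] StrongDual ℝ X}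
    (hproj : ∀ F, P (P F) = P F)
    (hrange : Set.range (fun F => P F) = {F : StrongDual ℝ X | ∀ y ∈ Y, F y = 0})
    (hnorm : ∀ F, ‖F‖ = ‖P F‖ + ‖F - P F‖)
    {g : StrongDual ℝ X} (hg : P g = 0) : ‖g.comp Y.subtypeL‖ = ‖g‖ := by
  refine le_antisymm (res_norm_le Y g) ?_
  obtain ⟨f, hfa, hfn⟩ := exists_extension_norm_eq Y (g.comp Y.subtypeL)
  have hfg : P (f - g) = f - g := by
    rw [← mem_ann_iff hproj hrange]
    intro y hy
    have h1 := hfa ⟨y, hy⟩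
    simp only [ContinuousLinearMap.comp_apply, Submodule.subtypeL_apply,
      Submodule.coe_mk] at h1
    simp [h1]
  have hPf : P f = f - g := by
    have h2 : P (f - g) = P f - P g := map_sub P f g
    rw [h2, hg, sub_zero] at hfg
    exact hfg
  have h3 : f - P f = g := by rw [hPf]; abel
  have h4 := hnorm f
  rw [h3] at h4
  have h5 : ‖g‖ ≤ ‖f‖ := by
    have := norm_nonneg (P f); linarith
  rw [hfn] at h5
  exact h5

private lemma exG {Y : Subspace ℝ X} (hYc : IsClosed (Y : Set X)) (hproper : Y ≠ ⊤) :
    ∃ G : StrongDual ℝ X, (∀ y ∈ Y, G y = 0) ∧ ‖G‖ = 1 := by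
  haveI : IsClosed (Y : Set X) := hYc
  obtain ⟨x₁, hx₁⟩ : ∃ x, x ∉ Y := by
    by_contra h
    push_neg at h
    exact hproper (Submodule.eq_top_iff'.2 h)
  have hne : (Submodule.Quotient.mk x₁ : X ⧸ Y) ≠ 0 := by
    simpa [Submodule.Quotient.mk_eq_zero] using hx₁
  obtain ⟨gq, hgq1, hgq2⟩ := exists_dual_vector ℝ _ (norm_ne_zero_iff.mpr hne)
  have hb : ∀ x : X, ‖(gq.toLinearMap.comp Y.mkQ) x‖ ≤ 1 * ‖x‖ := by
    intro x
    have h1 := gq.le_opNorm ((Submodule.Quotient.mk x : X ⧸ Y))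
    have h2 : ‖(Submodule.Quotient.mk x : X ⧸ Y)‖ ≤ ‖x‖ := Submodule.Quotient.norm_mk_le _ x
    have h3 : ‖gq‖ = 1 := hgq1
    simp only [LinearMap.coe_comp, ContinuousLinearMap.coe_coe, Function.comp_apply,
      Submodule.mkQ_apply, one_mul]
    calc ‖gq (Submodule.Quotient.mk x)‖ ≤ ‖gq‖ * ‖(Submodule.Quotient.mk x : X ⧸ Y)‖ := h1
      _ ≤ 1 * ‖x‖ := by rw [h3]; exact mul_le_mul_of_nonneg_left h2 zero_le_one
      _ = ‖x‖ := one_mul _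
  set G := LinearMap.mkContinuous (gq.toLinearMap.comp Y.mkQ) 1 hb with hGdef
  have hGapp : ∀ x : X, G x = gq (Submodule.Quotient.mk x) := fun x => rfl
  refine ⟨G, ?_, ?_⟩
  · intro y hy
    rw [hGapp, (Submodule.Quotient.mk_eq_zero Y).2 hy, map_zero]
  · refine le_antisymm (LinearMap.mkContinuous_norm_le _ zero_le_one hb) ?_
    by_contra hc
    push_neg at hc
    set c := (1 + ‖G‖) / 2 with hcdef
    have hc1 : c < 1 := by simp only [hcdef]; linarith
    have hc2 : ‖G‖ < c := by simp only [hcdef]; linarith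
    obtain ⟨ξ, hξ1, hξ2⟩ := gq.exists_lt_apply_of_lt_opNorm (r := c) (by rw [hgq1]; exact hc1)
    obtain ⟨xr, hxr1, hxr2⟩ := Submodule.Quotient.norm_mk_lt ξ (show (0:ℝ) < 1 - ‖ξ‖ by linarith)
    have h6 : ‖G xr‖ ≤ ‖G‖ := by
      calc ‖G xr‖ ≤ ‖G‖ * ‖xr‖ := G.le_opNorm xr
        _ ≤ ‖G‖ * 1 := by
            refine mul_le_mul_of_nonneg_left ?_ (norm_nonneg G)
            linarith
        _ = ‖G‖ := mul_one _
    rw [hGapp, hxr1] at h6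
    linarith

private lemma span_P_zero {P : StrongDual ℝ X →L[ℝ] StrongDual ℝ X}
    {m : Type*} [Fintype m] (g : m → StrongDual ℝ X) (hg : ∀ k, P (g k) = 0)
    {F : StrongDual ℝ X}
    (hF : (F : X →ₗ[ℝ] ℝ) ∈ Submodule.span ℝ (Set.range (fun k => ((g k : X →ₗ[ℝ] ℝ))))) :
    P F = 0 := by
  obtain ⟨c, hc⟩ := (Submodule.mem_span_range_iff_exists_fun ℝ).1 hF
  have hFe : F = ∑ k, c k • g k := by
    ext x
    have h1 := LinearMap.congr_fun hc x
    simpa using h1.symm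
  rw [hFe, map_sum]
  refine Finset.sum_eq_zero (fun k _ => ?_)
  rw [map_smul, hg k, smul_zero]

private lemma ex_x0 {Y : Subspace ℝ X} {P : StrongDual ℝ X →L[ℝ] StrongDual ℝ X}
    (hproj : ∀ F, P (P F) = P F)
    (hrange : Set.range (fun F => P F) = {F : StrongDual ℝ X | ∀ y ∈ Y, F y = 0})
    (hnorm : ∀ F, ‖F‖ = ‖P F‖ + ‖F - P F‖)
    {G : StrongDual ℝ X} (hGY : ∀ y ∈ Y, G y = 0) (hG1 : ‖G‖ = 1)
    {m : Type*} [Fintype m] (g : m → StrongDual ℝ X) (hg : ∀ k, P (g k) = 0)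
    {δ : ℝ} (hδ : 0 < δ) :
    ∃ x₀ : X, ‖x₀‖ ≤ 1 ∧ (∀ k, g k x₀ = 0) ∧ 1 - δ < G x₀ := by
  classical
  set N : Subspace ℝ X := ⨅ k, LinearMap.ker (g k : X →ₗ[ℝ] ℝ) with hN
  have hmemN : ∀ x : X, x ∈ N ↔ ∀ k, g k x = 0 := by
    intro x
    simp [hN, Submodule.mem_iInf, LinearMap.mem_ker]
  obtain ⟨G', hext, hnormeq⟩ := exists_extension_norm_eq N (G.comp N.subtypeL)
  have hvanish : ∀ x : X, (∀ k, g k x = 0) → (G - G') x = 0 := by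
    intro x hx
    have h1 := hext ⟨x, (hmemN x).2 hx⟩
    have h2 : G' x = G x := h1
    simp [ContinuousLinearMap.sub_apply, h2]
  have hspan : ((G - G' : StrongDual ℝ X) : X →ₗ[ℝ] ℝ) ∈
      Submodule.span ℝ (Set.range fun k => ((g k : X →ₗ[ℝ] ℝ))) := by
    apply mem_span_of_iInf_ker_le_ker (L := fun k => ((g k : X →ₗ[ℝ] ℝ)))
    intro x hx
    rw [Submodule.mem_iInf] at hx
    exact hvanish x (fun k => hx k)
  have hPGG' : P (G - G') = 0 := span_P_zero g hg hspan
  have hPG : P G = G := (mem_ann_iff hproj hrange G).1 hGY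
  have hPG' : P G' = G := by
    have h3 : P (G - G') = P G - P G' := map_sub P G G'
    rw [hPGG'] at h3
    have h4 : P G' = P G := by
      have := sub_eq_zero.1 h3.symm
      exact this.symm
    rw [h4, hPG]
  have h1le : 1 ≤ ‖G'‖ := by
    have h2 := hnorm G'
    rw [hPG', hG1] at h2
    have := norm_nonneg (G' - G)
    linarith
  have h3 : 1 - δ < ‖G.comp N.subtypeL‖ := by
    rw [← hnormeq]
    linarith
  obtain ⟨ξ, hξ1, hξ2⟩ := (G.comp N.subtypeL).exists_lt_apply_of_lt_opNorm h3
  have hξmem : ∀ k, g k (ξ : X) = 0 := (hmemN _).1 ξ.2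
  have hξnorm : ‖(ξ : X)‖ ≤ 1 := by rw [Submodule.norm_coe]; linarith
  have hξval : 1 - δ < |G (ξ : X)| := by
    have : (G.comp N.subtypeL) ξ = G (ξ : X) := rfl
    rwa [this, Real.norm_eq_abs] at hξ2
  rcases le_or_gt 0 (G (ξ : X)) with hpos | hneg
  · exact ⟨(ξ : X), hξnorm, hξmem, by rwa [abs_of_nonneg hpos] at hξval⟩
  · refine ⟨-(ξ : X), by simpa using hξnorm, fun k => by simp [hξmem k], ?_⟩
    rw [map_neg]
    rwa [abs_of_neg hneg] at hξval

private lemma density {Y : Subspace ℝ X} {P : StrongDual ℝ X →L[ℝ] StrongDual ℝ X}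
    (hproj : ∀ F, P (P F) = P F)
    (hrange : Set.range (fun F => P F) = {F : StrongDual ℝ X | ∀ y ∈ Y, F y = 0})
    (hnorm : ∀ F, ‖F‖ = ‖P F‖ + ‖F - P F‖)
    {J : Type*} [Fintype J] [DecidableEq J] (φ : J → StrongDual ℝ X) (hφ : ∀ j, P (φ j) = 0)
    (x : X) (hx : ‖x‖ ≤ 1) {δ : ℝ} (hδ : 0 < δ) :
    ∃ y : X, y ∈ Y ∧ ‖y‖ ≤ 1 ∧ ∀ j, |φ j (y - x)| < δ := by
  classical
  set Φl : X →ₗ[ℝ] (J → ℝ) := LinearMap.pi (fun j => ((φ j : X →ₗ[ℝ] ℝ))) with hΦ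
  set K : Set X := {v | v ∈ Y ∧ ‖v‖ ≤ 1} with hK
  by_cases hmem : Φl x ∈ closure (Φl '' K)
  · rw [Metric.mem_closure_iff] at hmem
    obtain ⟨b, hb1, hb2⟩ := hmem δ hδ
    obtain ⟨y, hyK, hyb⟩ := hb1
    refine ⟨y, hyK.1, hyK.2, fun j => ?_⟩
    rw [← hyb] at hb2
    have h5 : dist (Φl x j) (Φl y j) ≤ dist (Φl x) (Φl y) := dist_le_pi_dist _ _ j
    have h6 : Φl x j = φ j x := rfl
    have h7 : Φl y j = φ j y := rfl
    have h8 : |φ j (y - x)| = dist (Φl x j) (Φl y j) := by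
      rw [h6, h7, Real.dist_eq, map_sub]
      rw [abs_sub_comm]
    linarith
  · exfalso
    have hKconv : Convex ℝ K := by
      have : K = (Y : Set X) ∩ Metric.closedBall 0 1 := by
        ext v
        simp [hK, Metric.mem_closedBall, dist_zero_right]
      rw [this]
      exact (Submodule.convex Y).inter (convex_closedBall 0 1)
    have hconv : Convex ℝ (closure (Φl '' K)) := (hKconv.linear_image Φl).closure
    obtain ⟨ℓ, u, hu1, hu2⟩ := geometric_hahn_banach_closed_point hconv isClosed_closure hmem
    set a : J → ℝ := fun j => ℓ (Pi.single j 1) with ha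
    have hℓ : ∀ v : J → ℝ, ℓ v = ∑ j, v j * a j := by
      intro v
      conv_lhs => rw [← Finset.univ_sum_single v]
      rw [map_sum]
      refine Finset.sum_congr rfl (fun j _ => ?_)
      have h9 : (Pi.single j (v j) : J → ℝ) = (v j) • (Pi.single j 1 : J → ℝ) := by
        ext i
        by_cases hij : i = j
        · subst hij; simp
        · simp [Pi.single_apply, hij]
      rw [h9, map_smul]
      simp [ha, smul_eq_mul, mul_comm]
    set ga : StrongDual ℝ X := ∑ j, a j • φ j with hga
    have hgaapp : ∀ v : X, ga v = ℓ (Φl v) := by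
      intro v
      rw [hℓ]
      rw [hga]
      rw [ContinuousLinearMap.sum_apply]
      refine Finset.sum_congr rfl (fun j _ => ?_)
      have : Φl v j = φ j v := rfl
      rw [this, ContinuousLinearMap.smul_apply, smul_eq_mul, mul_comm]
    have hu0 : 0 < u := by
      have h0K : (0 : X) ∈ K := ⟨Y.zero_mem, by simp⟩
      have h10 := hu1 (Φl 0) (subset_closure ⟨0, h0K, rfl⟩)
      simpa using h10
    have hPga : P ga = 0 := by
      rw [hga, map_sum]
      refine Finset.sum_eq_zero (fun j _ => ?_)
      rw [map_smul, hφ j, smul_zero]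
    have h7 : u < ‖ga‖ := by
      have h11 : ga x ≤ ‖ga‖ := by
        calc ga x ≤ |ga x| := le_abs_self _
          _ ≤ ‖ga‖ * ‖x‖ := ga.le_opNorm x
          _ ≤ ‖ga‖ * 1 := mul_le_mul_of_nonneg_left hx (norm_nonneg ga)
          _ = ‖ga‖ := mul_one _
      rw [hgaapp x] at h11
      linarith [hu2]
    rw [← res_norm_eq hproj hrange hnorm hPga] at h7
    obtain ⟨y', hy'1, hy'2⟩ := (ga.comp Y.subtypeL).exists_lt_apply_of_lt_opNorm h7
    have hyval : u < |ga (y' : X)| := by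
      have : (ga.comp Y.subtypeL) y' = ga (y' : X) := rfl
      rwa [this, Real.norm_eq_abs] at hy'2
    have hynorm : ‖(y' : X)‖ ≤ 1 := by rw [Submodule.norm_coe]; linarith
    set w : X := if 0 ≤ ga (y' : X) then (y' : X) else -(y' : X) with hw
    have hwK : w ∈ K := by
      rw [hw]
      split_ifs
      · exact ⟨y'.2, hynorm⟩
      · exact ⟨Y.neg_mem y'.2, by simpa using hynorm⟩
    have hwval : u < ga w := by
      rw [hw]
      split_ifs with hsgn
      · rwa [abs_of_nonneg hsgn] at hyval
      · rw [map_neg]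
        rwa [abs_of_neg (lt_of_not_ge hsgn)] at hyval
    have h12 := hu1 (Φl w) (subset_closure ⟨w, hwK, rfl⟩)
    rw [← hgaapp w] at h12
    linarith

private lemma coeff_bound {W : Type*} [NormedAddCommGroup W] [NormedSpace ℝ W]
    {J : Type*} [Fintype J] [DecidableEq J] (ψ : J → (W →L[ℝ] ℝ)) :
    ∃ C : ℝ, 0 ≤ C ∧ ∀ FY : W →L[ℝ] ℝ,
      ((FY : W →ₗ[ℝ] ℝ) ∈ Submodule.span ℝ (Set.range fun j => ((ψ j : W →ₗ[ℝ] ℝ)))) →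
      ∃ c : J → ℝ, (∀ z : W, (∑ j, c j * ψ j z) = FY z) ∧ ∀ j, |c j| ≤ C * ‖FY‖ := by
  classical
  let α : (J → ℝ) →ₗ[ℝ] (W →L[ℝ] ℝ) :=
    { toFun := fun c => ∑ j, c j • ψ j
      map_add' := by
        intro c d
        simp [add_smul, Finset.sum_add_distrib]
      map_smul' := by
        intro r c
        simp [mul_smul, Finset.smul_sum] }
  have hαapp : ∀ c : J → ℝ, α c = ∑ j, c j • ψ j := fun c => rfl
  haveI hVfd : FiniteDimensional ℝ (LinearMap.range α) := inferInstance
  obtain ⟨κ, hκ⟩ := (α.rangeRestrict).exists_rightInverse_of_surjective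
    (LinearMap.range_rangeRestrict α)
  refine ⟨‖LinearMap.toContinuousLinearMap κ‖, ContinuousLinearMap.opNorm_nonneg _, ?_⟩
  intro FY hFYspan
  obtain ⟨c0, hc0⟩ := (Submodule.mem_span_range_iff_exists_fun ℝ).1 hFYspan
  have hFYrange : FY ∈ LinearMap.range α := by
    refine ⟨c0, ?_⟩
    ext z
    have h24 := LinearMap.congr_fun hc0 z
    have h24' : (α c0) z = (∑ j, c0 j • ψ j) z := rfl
    rw [h24', ContinuousLinearMap.sum_apply]
    simpa using h24
  refine ⟨κ ⟨FY, hFYrange⟩, ?_, ?_⟩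
  · intro z
    have h25 := LinearMap.congr_fun hκ (⟨FY, hFYrange⟩ : LinearMap.range α)
    have h26 : (LinearMap.rangeRestrict α) (κ (⟨FY, hFYrange⟩ : LinearMap.range α))
        = (⟨FY, hFYrange⟩ : LinearMap.range α) := h25
    have h27 : α (κ (⟨FY, hFYrange⟩ : LinearMap.range α)) = FY := by
      have h28 := congrArg Subtype.val h26
      simpa using h28
    have h29 := DFunLike.congr_fun h27 z
    rw [hαapp, ContinuousLinearMap.sum_apply] at h29
    have h30 : ∀ j : J, ((κ ⟨FY, hFYrange⟩) j • ψ j) z = (κ ⟨FY, hFYrange⟩) j * ψ j z :=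
      fun j => rfl
    rw [Finset.sum_congr rfl (fun j _ => h30 j)] at h29
    exact h29
  · intro j
    have h31 : ‖κ ⟨FY, hFYrange⟩‖ ≤ ‖LinearMap.toContinuousLinearMap κ‖ * ‖FY‖ := by
      have h32 : κ ⟨FY, hFYrange⟩ = LinearMap.toContinuousLinearMap κ ⟨FY, hFYrange⟩ := rfl
      rw [h32]
      have h33 := (LinearMap.toContinuousLinearMap κ).le_opNorm ⟨FY, hFYrange⟩
      have h34 : ‖(⟨FY, hFYrange⟩ : LinearMap.range α)‖ = ‖FY‖ := rfl
      rwa [h34] at h33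
    have h35 := norm_le_pi_norm (κ ⟨FY, hFYrange⟩) j
    rw [Real.norm_eq_abs] at h35
    linarith

private lemma ball_lemma {Y : Subspace ℝ X} {P : StrongDual ℝ X →L[ℝ] StrongDual ℝ X}
    (hproj : ∀ F, P (P F) = P F)
    (hrange : Set.range (fun F => P F) = {F : StrongDual ℝ X | ∀ y ∈ Y, F y = 0})
    (hnorm : ∀ F, ‖F‖ = ‖P F‖ + ‖F - P F‖)
    {ι : Type*} [Fintype ι] [DecidableEq ι] (yc : ι → X)
    (hyc : ∀ k, yc k ∈ Y ∧ ‖yc k‖ ≤ 1)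
    {J : Type*} [Fintype J] [DecidableEq J] (φ : J → StrongDual ℝ X) (hφ : ∀ j, P (φ j) = 0)
    (x : X) (hx : ‖x‖ ≤ 1) {ε : ℝ} (hε : 0 < ε) :
    ∃ w : X, x - w ∈ Y ∧ (∀ k, ‖w + yc k‖ < 1 + ε) ∧ (∀ j, |φ j w| ≤ ε) := by
  classical
  obtain ⟨C, hC0, hCprop⟩ := coeff_bound (fun j => (φ j).comp Y.subtypeL)
  set K : ℝ := (Fintype.card J : ℝ) * C with hKdef
  have hK0 : 0 ≤ K := by rw [hKdef]; positivity
  set δ' : ℝ := ε / (2 * (K + 1)) with hδ'def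
  have hδ'pos : 0 < δ' := by rw [hδ'def]; positivity
  have hδ'K : δ' * K ≤ ε / 2 := by
    rw [hδ'def, div_mul_eq_mul_div, div_le_iff₀ (by positivity)]
    nlinarith
  have hδ'ε : δ' ≤ ε := by
    rw [hδ'def, div_le_iff₀ (by positivity)]
    nlinarith
  obtain ⟨y₀, hy₀Y, hy₀n, hy₀j⟩ := density hproj hrange hnorm φ hφ x hx hδ'pos
  set Slab : Set X := {y : X | y ∈ Y ∧ ∀ j, |φ j (y - x)| ≤ δ'} with hSlabdef
  have hy₀Slab : y₀ ∈ Slab := ⟨hy₀Y, fun j => (hy₀j j).le⟩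
  have main : ∃ y ∈ Slab, ∀ k, ‖x + yc k - y‖ < 1 + ε := by
    by_contra hcon
    push_neg at hcon
    set D : Set (ι → X) := (fun y => fun k => x + yc k - y) '' Slab with hDdef
    set O : Set (ι → X) := Metric.ball (0 : ι → X) (1 + ε) with hOdef
    have hdisj : Disjoint O D := by
      rw [Set.disjoint_left]
      rintro v hvO ⟨y, hySlab, rfl⟩
      obtain ⟨k, hk⟩ := hcon y hySlab
      rw [hOdef, mem_ball_zero_iff] at hvO
      have h1 : ‖x + yc k - y‖ ≤ ‖fun k => x + yc k - y‖ :=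
        norm_le_pi_norm (fun k : ι => x + yc k - y) k
      linarith
    have hDconv : Convex ℝ D := by
      rintro v1 ⟨y1, hy1, rfl⟩ v2 ⟨y2, hy2, rfl⟩ a b ha hb hab
      refine ⟨a • y1 + b • y2, ⟨Y.add_mem (Y.smul_mem a hy1.1) (Y.smul_mem b hy2.1), ?_⟩, ?_⟩
      · intro j
        have h2 : a • y1 + b • y2 - x = a • (y1 - x) + b • (y2 - x) := by
          rw [smul_sub, smul_sub]
          rw [show a • y1 - a • x + (b • y2 - b • x) = a • y1 + b • y2 - (a + b) • x by
            rw [add_smul]; abel]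
          rw [hab, one_smul]
        rw [h2, map_add, map_smul, map_smul]
        have h3 := hy1.2 j
        have h4 := hy2.2 j
        calc |a • φ j (y1 - x) + b • φ j (y2 - x)|
            ≤ |a • φ j (y1 - x)| + |b • φ j (y2 - x)| := abs_add_le _ _
          _ = a * |φ j (y1 - x)| + b * |φ j (y2 - x)| := by
              rw [smul_eq_mul, smul_eq_mul, abs_mul, abs_mul, abs_of_nonneg ha, abs_of_nonneg hb]
          _ ≤ a * δ' + b * δ' := by
              have h3' := mul_le_mul_of_nonneg_left h3 ha
              have h4' := mul_le_mul_of_nonneg_left h4 hb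
              linarith
          _ = δ' := by rw [← add_mul, hab, one_mul]
      · funext k
        show x + yc k - (a • y1 + b • y2)
            = (a • (fun k => x + yc k - y1) + b • (fun k => x + yc k - y2)) k
        show x + yc k - (a • y1 + b • y2) = a • (x + yc k - y1) + b • (x + yc k - y2)
        symm
        rw [smul_sub, smul_sub, smul_add, smul_add]
        rw [show a • x + a • yc k - a • y1 + (b • x + b • yc k - b • y2)
            = (a + b) • x + (a + b) • yc k - (a • y1 + b • y2) by
          rw [add_smul, add_smul]; abel]
        rw [hab, one_smul, one_smul]
    obtain ⟨Λ, s₀, hO1, hD1⟩ :=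
      geometric_hahn_banach_open (convex_ball (0 : ι → X) (1 + ε)) isOpen_ball hDconv hdisj
    have hsglbound : ∀ k : ι, ∀ u : X, ‖(LinearMap.single ℝ (fun _ : ι => X) k) u‖ ≤ 1 * ‖u‖ := by
      intro k u
      rw [one_mul]
      have hrepr : (LinearMap.single ℝ (fun _ : ι => X) k) u = Pi.single k u := rfl
      rw [hrepr]
      refine (pi_norm_le_iff_of_nonneg (norm_nonneg u)).2 (fun i => ?_)
      rcases eq_or_ne i k with hik | hik
      · subst hik
        rw [Pi.single_eq_same]
      · rw [Pi.single_eq_of_ne hik]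
        simpa using norm_nonneg u
    set Fk : ι → StrongDual ℝ X := fun k =>
      Λ.comp (LinearMap.mkContinuous (LinearMap.single ℝ (fun _ : ι => X) k) 1 (hsglbound k))
      with hFkdef
    have hΛsum : ∀ v : ι → X, Λ v = ∑ k, Fk k (v k) := by
      intro v
      conv_lhs => rw [← Finset.univ_sum_single v, map_sum]
      exact Finset.sum_congr rfl (fun k _ => rfl)
    have hs₀pos : 0 < s₀ := by
      have h5 := hO1 0 (mem_ball_self (by linarith))
      simpa using h5
    set S : ℝ := ∑ k, ‖Fk k‖ with hSdef
    have hS0 : 0 ≤ S := by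
      rw [hSdef]
      exact Finset.sum_nonneg (fun k _ => norm_nonneg _)
    have key1 : ∀ η : ℝ, 0 < η → (1 + ε) * (S - (Fintype.card ι : ℝ) * η) ≤ s₀ := by
      intro η hη
      have hexu : ∀ k : ι, ∃ u : X, ‖u‖ < 1 ∧ ‖Fk k‖ - η < Fk k u := by
        intro k
        by_cases hcase : ‖Fk k‖ - η < 0
        · exact ⟨0, by simp [zero_lt_one], by simpa using hcase⟩
        · have hlt : ‖Fk k‖ - η < ‖Fk k‖ := by linarith
          obtain ⟨u, hu1, hu2⟩ := (Fk k).exists_lt_apply_of_lt_opNorm hlt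
          rcases le_or_gt 0 (Fk k u) with h | h
          · exact ⟨u, hu1, by rwa [Real.norm_eq_abs, abs_of_nonneg h] at hu2⟩
          · refine ⟨-u, by simpa using hu1, ?_⟩
            rw [map_neg]
            rwa [Real.norm_eq_abs, abs_of_neg h] at hu2
      choose u hu1 hu2 using hexu
      have hvO : (fun k : ι => (1 + ε) • u k) ∈ O := by
        rw [hOdef, mem_ball_zero_iff]
        refine (pi_norm_lt_iff (by linarith : (0:ℝ) < 1 + ε)).2 (fun k => ?_)
        show ‖(1 + ε) • u k‖ < 1 + ε
        rw [norm_smul, Real.norm_eq_abs, abs_of_pos (by linarith : (0:ℝ) < 1 + ε)]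
        nlinarith [hu1 k, norm_nonneg (u k)]
      have h13 := hO1 _ hvO
      have h14 : Λ (fun k : ι => (1 + ε) • u k) = (1 + ε) * ∑ k, Fk k (u k) := by
        rw [hΛsum, Finset.mul_sum]
        refine Finset.sum_congr rfl (fun k _ => ?_)
        show Fk k ((1 + ε) • u k) = (1 + ε) * Fk k (u k)
        rw [map_smul, smul_eq_mul]
      have h15 : ∑ k, (‖Fk k‖ - η) ≤ ∑ k, Fk k (u k) :=
        Finset.sum_le_sum (fun k _ => (hu2 k).le)
      have h16 : ∑ k, (‖Fk k‖ - η) = S - (Fintype.card ι : ℝ) * η := by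
        rw [Finset.sum_sub_distrib, Finset.sum_const, Finset.card_univ, nsmul_eq_mul, hSdef]
      rw [h16] at h15
      nlinarith
    have key1' : (1 + ε) * S ≤ s₀ := by
      refine le_of_forall_pos_le_add (fun η' hη' => ?_)
      have hηpos : 0 < η' / ((1 + ε) * ((Fintype.card ι : ℝ) + 1)) := by positivity
      have h17 := key1 _ hηpos
      have h18 : (1 + ε) * ((Fintype.card ι : ℝ)
          * (η' / ((1 + ε) * ((Fintype.card ι : ℝ) + 1)))) ≤ η' := by
        have hpos : (0:ℝ) < (1 + ε) * ((Fintype.card ι : ℝ) + 1) := by positivity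
        have heq : (1 + ε) * ((Fintype.card ι : ℝ)
            * (η' / ((1 + ε) * ((Fintype.card ι : ℝ) + 1))))
            = η' * ((1 + ε) * (Fintype.card ι : ℝ)) / ((1 + ε) * ((Fintype.card ι : ℝ) + 1)) := by
          ring
        rw [heq, div_le_iff₀ hpos]
        nlinarith [Nat.cast_nonneg (α := ℝ) (Fintype.card ι), hη'.le]
      nlinarith
    have hD2 : ∀ y ∈ Slab, s₀ ≤ ∑ k, Fk k (x + yc k - y) := by
      intro y hy
      have h19 := hD1 _ ⟨y, hy, rfl⟩
      rwa [hΛsum] at h19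
    set F : StrongDual ℝ X := ∑ k, Fk k with hFdef
    have hFapp : ∀ v : X, F v = ∑ k, Fk k v := by
      intro v
      rw [hFdef, ContinuousLinearMap.sum_apply]
    have hA := hD2 y₀ hy₀Slab
    set A : ℝ := ∑ k, Fk k (x + yc k - y₀) with hAdef
    have hFY0 : ∀ z : X, z ∈ Y → (∀ j, φ j z = 0) → F z = 0 := by
      intro z hzY hzj
      have hmem : ∀ t : ℝ, y₀ + t • z ∈ Slab := by
        intro t
        refine ⟨Y.add_mem hy₀Y (Y.smul_mem t hzY), fun j => ?_⟩
        have h20 : y₀ + t • z - x = (y₀ - x) + t • z := by abel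
        rw [h20, map_add, map_smul, smul_eq_mul, hzj j, mul_zero, add_zero]
        exact (hy₀j j).le
      have hineq : ∀ t : ℝ, s₀ ≤ A - t * F z := by
        intro t
        have h21 := hD2 _ (hmem t)
        have h22 : ∀ k : ι, Fk k (x + yc k - (y₀ + t • z))
            = Fk k (x + yc k - y₀) - t * Fk k z := by
          intro k
          rw [show x + yc k - (y₀ + t • z) = (x + yc k - y₀) - t • z by abel]
          rw [map_sub, map_smul, smul_eq_mul]
        rw [Finset.sum_congr rfl (fun k _ => h22 k), Finset.sum_sub_distrib,
          ← Finset.mul_sum, ← hFapp z, ← hAdef] at h21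
        exact h21
      by_contra hFz
      have h23 := hineq ((A - s₀ + 1) / F z)
      rw [div_mul_cancel₀ _ hFz] at h23
      linarith
    -- coefficients
    have hFYspan : ((F.comp Y.subtypeL : ↥Y →L[ℝ] ℝ) : ↥Y →ₗ[ℝ] ℝ) ∈
        Submodule.span ℝ (Set.range fun j => ((((φ j).comp Y.subtypeL : ↥Y →L[ℝ] ℝ)) : ↥Y →ₗ[ℝ] ℝ)) := by
      apply mem_span_of_iInf_ker_le_ker
        (L := fun j => ((((φ j).comp Y.subtypeL : ↥Y →L[ℝ] ℝ)) : ↥Y →ₗ[ℝ] ℝ))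
      intro z hz
      rw [Submodule.mem_iInf] at hz
      exact hFY0 (z : X) z.2 (fun j => hz j)
    obtain ⟨c, hc1, hc2⟩ := hCprop (F.comp Y.subtypeL) hFYspan
    have hFonY : ∀ y' : X, (hy' : y' ∈ Y) → F y' = ∑ j, c j * φ j y' := by
      intro y' hy'
      exact (hc1 ⟨y', hy'⟩).symm
    have hFYnorm : ‖F.comp Y.subtypeL‖ ≤ S := by
      have h40 : ‖F.comp Y.subtypeL‖ ≤ ‖F‖ := res_norm_le Y F
      have h41 : ‖F‖ ≤ S := by
        rw [hFdef, hSdef]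
        exact norm_sum_le _ _
      linarith
    have hsumc : ∑ j, |c j| ≤ K * S := by
      have h42 : ∑ j, |c j| ≤ ∑ _j : J, (C * ‖F.comp Y.subtypeL‖) :=
        Finset.sum_le_sum (fun j _ => hc2 j)
      rw [Finset.sum_const, Finset.card_univ, nsmul_eq_mul] at h42
      have h43 : (Fintype.card J : ℝ) * (C * ‖F.comp Y.subtypeL‖) ≤ K * S := by
        rw [hKdef]
        have h44 := mul_le_mul_of_nonneg_left hFYnorm
          (by positivity : (0:ℝ) ≤ (Fintype.card J : ℝ) * C)
        nlinarith
      linarith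
    -- the functional φc and the identity P F = F - φc
    set φc : StrongDual ℝ X := ∑ j, c j • φ j with hφcdef
    have hφcapp : ∀ v : X, φc v = ∑ j, c j * φ j v := by
      intro v
      rw [hφcdef, ContinuousLinearMap.sum_apply]
      exact Finset.sum_congr rfl (fun j _ => rfl)
    have hPφc : P φc = 0 := by
      rw [hφcdef, map_sum]
      refine Finset.sum_eq_zero (fun j _ => ?_)
      rw [map_smul, hφ j, smul_zero]
    have hPF : P F = F - φc := by
      have hH : P (F - φc) = F - φc := by
        refine (mem_ann_iff hproj hrange _).1 (fun y hy => ?_)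
        rw [ContinuousLinearMap.sub_apply, hφcapp, hFonY y hy, sub_self]
      have h45 : P (F - φc) = P F - P φc := map_sub P F φc
      rw [hPφc, sub_zero] at h45
      rw [← h45, hH]
    -- term decomposition and estimates
    have hannPFk : ∀ k : ι, ∀ y ∈ Y, (P (Fk k)) y = 0 := by
      intro k
      exact (mem_ann_iff hproj hrange (P (Fk k))).2 (hproj (Fk k))
    have hterm : ∀ k : ι, Fk k (x + yc k - y₀)
        = Fk k x + (Fk k - P (Fk k)) (yc k) - Fk k y₀ := by
      intro k
      rw [map_sub, map_add]
      have h33 : (Fk k - P (Fk k)) (yc k) = Fk k (yc k) - (P (Fk k)) (yc k) := rfl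
      rw [h33, hannPFk k (yc k) (hyc k).1, sub_zero]
    have hAeq : A = (F x - F y₀) + ∑ k, (Fk k - P (Fk k)) (yc k) := by
      rw [hAdef, Finset.sum_congr rfl (fun k _ => hterm k)]
      rw [show ∀ g1 g2 g3 : ι → ℝ, (∑ k, (g1 k + g2 k - g3 k))
          = ((∑ k, g1 k) - (∑ k, g3 k)) + ∑ k, g2 k from fun g1 g2 g3 => by
        rw [Finset.sum_sub_distrib, Finset.sum_add_distrib]; ring]
      rw [← hFapp x, ← hFapp y₀]
    have hPFx : P F x ≤ ∑ k, ‖P (Fk k)‖ := by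
      have hHdef : P F = ∑ k, P (Fk k) := by rw [hFdef, map_sum]
      calc P F x ≤ |P F x| := le_abs_self _
        _ ≤ ‖P F‖ * ‖x‖ := by
            have := (P F).le_opNorm x
            rwa [Real.norm_eq_abs] at this
        _ ≤ ‖P F‖ * 1 := mul_le_mul_of_nonneg_left hx (norm_nonneg _)
        _ = ‖P F‖ := mul_one _
        _ ≤ ∑ k, ‖P (Fk k)‖ := by rw [hHdef]; exact norm_sum_le _ _
    have hφcx : φc (x - y₀) ≤ δ' * ∑ j, |c j| := by
      rw [hφcapp]
      have h46 : ∀ j : J, c j * φ j (x - y₀) ≤ |c j| * δ' := by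
        intro j
        have h47 : |φ j (x - y₀)| ≤ δ' := by
          rw [show (x - y₀ : X) = -(y₀ - x) by abel, map_neg, abs_neg]
          exact (hy₀j j).le
        calc c j * φ j (x - y₀) ≤ |c j * φ j (x - y₀)| := le_abs_self _
          _ = |c j| * |φ j (x - y₀)| := abs_mul _ _
          _ ≤ |c j| * δ' := mul_le_mul_of_nonneg_left h47 (abs_nonneg _)
      calc (∑ j, c j * φ j (x - y₀)) ≤ ∑ j, |c j| * δ' := Finset.sum_le_sum (fun j _ => h46 j)
        _ = δ' * ∑ j, |c j| := by
            rw [Finset.mul_sum]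
            exact Finset.sum_congr rfl (fun j _ => mul_comm _ _)
    have hFxy : F x - F y₀ = P F x + φc (x - y₀) := by
      have h48 : φc (x - y₀) = φc x - φc y₀ := map_sub φc x y₀
      have h49 : F y₀ = φc y₀ := by rw [hφcapp, hFonY y₀ hy₀Y]
      have h50 : P F x = F x - φc x := by rw [hPF]; rfl
      rw [h48, h49, h50]
      ring
    have hsec : ∀ k : ι, (Fk k - P (Fk k)) (yc k) ≤ ‖Fk k - P (Fk k)‖ := by
      intro k
      calc (Fk k - P (Fk k)) (yc k) ≤ |(Fk k - P (Fk k)) (yc k)| := le_abs_self _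
        _ ≤ ‖Fk k - P (Fk k)‖ * ‖yc k‖ := by
            have := (Fk k - P (Fk k)).le_opNorm (yc k)
            rwa [Real.norm_eq_abs] at this
        _ ≤ ‖Fk k - P (Fk k)‖ * 1 := mul_le_mul_of_nonneg_left (hyc k).2 (norm_nonneg _)
        _ = ‖Fk k - P (Fk k)‖ := mul_one _
    have hsum_split : (∑ k, ‖P (Fk k)‖) + (∑ k, ‖Fk k - P (Fk k)‖) = S := by
      rw [hSdef, ← Finset.sum_add_distrib]
      exact Finset.sum_congr rfl (fun k _ => (hnorm (Fk k)).symm)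
    -- final contradiction
    have hAbound : A ≤ S + δ' * (K * S) := by
      have h51 : ∑ k, (Fk k - P (Fk k)) (yc k) ≤ ∑ k, ‖Fk k - P (Fk k)‖ :=
        Finset.sum_le_sum (fun k _ => hsec k)
      have h52 : δ' * ∑ j, |c j| ≤ δ' * (K * S) :=
        mul_le_mul_of_nonneg_left hsumc hδ'pos.le
      calc A = (F x - F y₀) + ∑ k, (Fk k - P (Fk k)) (yc k) := hAeq
        _ = P F x + φc (x - y₀) + ∑ k, (Fk k - P (Fk k)) (yc k) := by rw [hFxy]
        _ ≤ (∑ k, ‖P (Fk k)‖) + δ' * ∑ j, |c j| + ∑ k, ‖Fk k - P (Fk k)‖ := by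
            have := hPFx
            have := hφcx
            linarith
        _ ≤ S + δ' * (K * S) := by
            have h53 := hsum_split
            linarith
    have hfinal1 : (1 + ε) * S ≤ S + (ε / 2) * S := by
      have h54 : δ' * (K * S) ≤ (ε / 2) * S := by
        have := mul_le_mul_of_nonneg_right hδ'K hS0
        calc δ' * (K * S) = (δ' * K) * S := by ring
          _ ≤ (ε / 2) * S := this
      linarith [key1', hA, hAbound]
    have hSzero : S ≤ 0 := by nlinarith
    have hS : S = 0 := le_antisymm hSzero hS0
    have hcontr : s₀ ≤ 0 := by
      have := hAbound
      rw [hS] at this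
      simpa using le_trans hA (by linarith)
    linarith
  obtain ⟨y, hySlab, hyball⟩ := main
  refine ⟨x - y, by simpa using hySlab.1, fun k => ?_, fun j => ?_⟩
  · have h55 := hyball k
    rw [show x - y + yc k = x + yc k - y by abel]
    exact h55
  · have h34 := hySlab.2 j
    rw [show (x - y : X) = -(y - x) by abel, map_neg, abs_neg]
    exact le_trans h34 hδ'ε

private lemma octaZ {Y : Subspace ℝ X} {P : StrongDual ℝ X →L[ℝ] StrongDual ℝ X}
    (hYc : IsClosed (Y : Set X)) (hproper : Y ≠ ⊤)
    (hproj : ∀ F, P (P F) = P F)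
    (hrange : Set.range (fun F => P F) = {F : StrongDual ℝ X | ∀ y ∈ Y, F y = 0})
    (hnorm : ∀ F, ‖F‖ = ‖P F‖ + ‖F - P F‖)
    (hnorming : ∀ x : X,
      ‖x‖ = sSup {r : ℝ | ∃ F : StrongDual ℝ X, P F = 0 ∧ ‖F‖ ≤ 1 ∧ r = |F x|})
    {ι : Type*} [Fintype ι] [DecidableEq ι] (g : ι → StrongDual ℝ X)
    (hg0 : ∀ k, P (g k) = 0) (hg1 : ∀ k, ‖g k‖ ≤ 1)
    {ε : ℝ} (hε : 0 < ε) :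
    ∃ T : StrongDual ℝ X, P T = 0 ∧ ‖T‖ ≤ 1 ∧ ∀ k, ‖g k‖ + 1 - ε ≤ ‖g k + T‖ := by
  classical
  set δ : ℝ := ε / 8 with hδdef
  have hδpos : 0 < δ := by rw [hδdef]; positivity
  obtain ⟨G, hGY, hG1⟩ := exG hYc hproper
  have hyk : ∀ k : ι, ∃ y : X, y ∈ Y ∧ ‖y‖ ≤ 1 ∧ ‖g k‖ - δ < g k y := by
    intro k
    by_cases hcase : ‖g k‖ - δ < 0
    · exact ⟨0, Y.zero_mem, by simp, by simpa using hcase⟩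
    · have h1 : ‖g k‖ - δ < ‖(g k).comp Y.subtypeL‖ := by
        rw [res_norm_eq hproj hrange hnorm (hg0 k)]
        linarith
      obtain ⟨z, hz1, hz2⟩ := ((g k).comp Y.subtypeL).exists_lt_apply_of_lt_opNorm h1
      have hzz : ((g k).comp Y.subtypeL) z = g k (z : X) := rfl
      rw [hzz, Real.norm_eq_abs] at hz2
      rcases le_or_gt 0 (g k (z : X)) with h | h
      · refine ⟨(z : X), z.2, by rw [Submodule.norm_coe]; linarith, ?_⟩
        rwa [abs_of_nonneg h] at hz2
      · refine ⟨-(z : X), Y.neg_mem z.2, by rw [norm_neg, Submodule.norm_coe]; linarith, ?_⟩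
        rw [map_neg]
        rwa [abs_of_neg h] at hz2
  choose yk hyk1 hyk2 hyk3 using hyk
  obtain ⟨x₀, hx₀1, hx₀2, hx₀3⟩ := ex_x0 hproj hrange hnorm hGY hG1 g hg0 hδpos
  set yc : ι × Bool → X := fun p => if p.2 then yk p.1 else -(yk p.1) with hycdef
  have hyc : ∀ p : ι × Bool, yc p ∈ Y ∧ ‖yc p‖ ≤ 1 := by
    intro p
    rw [hycdef]
    dsimp only
    split_ifs
    · exact ⟨hyk1 p.1, hyk2 p.1⟩
    · exact ⟨Y.neg_mem (hyk1 p.1), by simpa using hyk2 p.1⟩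
  obtain ⟨w, hw1, hw2, hw3⟩ := ball_lemma hproj hrange hnorm yc hyc g hg0 x₀ hx₀1 hδpos
  have hGw : 1 - δ < G w := by
    have h2 : G (x₀ - w) = 0 := hGY _ hw1
    have h3 : G x₀ - G w = 0 := by rw [← map_sub]; exact h2
    linarith
  have hwnorm_ge : 1 - δ < ‖w‖ := by
    have h5 : G w ≤ ‖w‖ := by
      calc G w ≤ |G w| := le_abs_self _
        _ ≤ ‖G‖ * ‖w‖ := by
            have := G.le_opNorm w
            rwa [Real.norm_eq_abs] at this
        _ = ‖w‖ := by rw [hG1, one_mul]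
    linarith
  have hTex : ∃ T : StrongDual ℝ X, P T = 0 ∧ ‖T‖ ≤ 1 ∧ 1 - δ < |T w| := by
    by_contra hcon
    push_neg at hcon
    have hub : ∀ r ∈ {r : ℝ | ∃ F : StrongDual ℝ X, P F = 0 ∧ ‖F‖ ≤ 1 ∧ r = |F w|}, r ≤ 1 - δ := by
      rintro r ⟨F, hF1, hF2, rfl⟩
      exact hcon F hF1 hF2
    have hne : {r : ℝ | ∃ F : StrongDual ℝ X, P F = 0 ∧ ‖F‖ ≤ 1 ∧ r = |F w|}.Nonempty :=
      ⟨|((0 : StrongDual ℝ X)) w|, 0, map_zero P, by simp, rfl⟩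
    have h6 := csSup_le hne hub
    rw [← hnorming w] at h6
    linarith
  obtain ⟨T₀, hT₀1, hT₀2, hT₀3⟩ := hTex
  set T : StrongDual ℝ X := if 0 ≤ T₀ w then T₀ else -T₀ with hTdef
  have hT1 : P T = 0 := by
    rw [hTdef]
    split_ifs
    · exact hT₀1
    · rw [map_neg, hT₀1, neg_zero]
  have hT2 : ‖T‖ ≤ 1 := by
    rw [hTdef]
    split_ifs
    · exact hT₀2
    · rwa [norm_neg]
  have hT3 : 1 - δ < T w := by
    rw [hTdef]
    split_ifs with hsgn
    · rwa [abs_of_nonneg hsgn] at hT₀3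
    · rw [ContinuousLinearMap.neg_apply]
      rwa [abs_of_neg (lt_of_not_ge hsgn)] at hT₀3
  refine ⟨T, hT1, hT2, fun k => ?_⟩
  have hq : ‖w + yk k‖ < 1 + δ := by
    have h7 := hw2 (k, true)
    rw [hycdef] at h7
    simpa using h7
  have hq' : ‖w - yk k‖ < 1 + δ := by
    have h8 := hw2 (k, false)
    rw [hycdef] at h8
    simpa [sub_eq_add_neg] using h8
  have hTyk : -(2*δ) ≤ T (yk k) := by
    have h9 : T (w - yk k) ≤ 1 + δ := by
      calc T (w - yk k) ≤ |T (w - yk k)| := le_abs_self _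
        _ ≤ ‖T‖ * ‖w - yk k‖ := by
            have := T.le_opNorm (w - yk k)
            rwa [Real.norm_eq_abs] at this
        _ ≤ 1 * (1 + δ) := mul_le_mul hT2 hq'.le (norm_nonneg _) zero_le_one
        _ = 1 + δ := one_mul _
    have h10 : T (w - yk k) = T w - T (yk k) := map_sub T _ _
    linarith
  have hgw : |g k w| ≤ δ := hw3 k
  have hgyk := hyk3 k
  have happ : (g k + T) (w + yk k) = g k w + g k (yk k) + T w + T (yk k) := by
    rw [ContinuousLinearMap.add_apply, map_add, map_add]
    ring
  have hval : ‖g k‖ + 1 - 5*δ ≤ (g k + T) (w + yk k) := by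
    rw [happ]
    have h11 := abs_le.1 hgw
    linarith [h11.1]
  have hub2 : (g k + T) (w + yk k) ≤ ‖g k + T‖ * (1 + δ) := by
    calc (g k + T) (w + yk k) ≤ |(g k + T) (w + yk k)| := le_abs_self _
      _ ≤ ‖g k + T‖ * ‖w + yk k‖ := by
          have := (g k + T).le_opNorm (w + yk k)
          rwa [Real.norm_eq_abs] at this
      _ ≤ ‖g k + T‖ * (1 + δ) := mul_le_mul_of_nonneg_left hq.le (norm_nonneg _)
  have harith : (‖g k‖ + 1 - ε) * (1 + δ) ≤ ‖g k‖ + 1 - 5*δ := by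
    have h12 := hg1 k
    have h13 := norm_nonneg (g k)
    nlinarith [hε.le, hδdef, hδpos.le]
  nlinarith [hval, hub2, harith, hδpos.le]

private lemma octa_sd2p {E : Type*} [NormedAddCommGroup E] [NormedSpace ℝ E]
    (hocta : ∀ (n : ℕ) (f : Fin n → StrongDual ℝ E) (ε : ℝ), 0 < ε → (∀ i, ‖f i‖ = 1) →
      ∃ T : StrongDual ℝ E, ‖T‖ ≤ 1 ∧ ∀ i, 2 - ε < ‖f i + T‖ ∧ 2 - ε < ‖f i - T‖) :
    HasSD2P E := by
  intro n hn f e l hf he hl hsum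
  classical
  have habs : ∀ (h : StrongDual ℝ E) (x : E), |h x| ≤ ‖h‖ * ‖x‖ := fun h x => by
    have := h.le_opNorm x
    rwa [Real.norm_eq_abs] at this
  set D := {z : E | ∃ g : Fin n → E,
    (∀ i, ‖g i‖ ≤ 1 ∧ f i (g i) > 1 - e i) ∧ z = ∑ i, l i • g i} with hD
  have hDnorm : ∀ z ∈ D, ‖z‖ ≤ 1 := by
    rintro z ⟨g, hg, rfl⟩
    calc ‖∑ i, l i • g i‖ ≤ ∑ i, ‖l i • g i‖ := norm_sum_le _ _
      _ ≤ ∑ i, l i := Finset.sum_le_sum (fun i _ => by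
          rw [norm_smul, Real.norm_eq_abs, abs_of_nonneg (hl i)]
          exact mul_le_of_le_one_right (hl i) (hg i).1)
      _ = 1 := hsum
  have hDbdd : Bornology.IsBounded D := by
    refine (Metric.isBounded_closedBall (x := (0:E)) (r := 1)).subset ?_
    intro z hz
    rw [Metric.mem_closedBall, dist_zero_right]
    exact hDnorm z hz
  refine le_antisymm ?_ ?_
  · refine Metric.diam_le_of_forall_dist_le (by norm_num) ?_
    intro z hz z' hz'
    rw [dist_eq_norm]
    calc ‖z - z'‖ ≤ ‖z‖ + ‖z'‖ := norm_sub_le _ _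
      _ ≤ 2 := by linarith [hDnorm z hz, hDnorm z' hz']
  · refine le_of_forall_pos_le_add (fun η hη => ?_)
    have hne : (Finset.univ : Finset (Fin n)).Nonempty := ⟨⟨0, hn⟩, Finset.mem_univ _⟩
    set em := Finset.univ.inf' hne e with hem
    have hem_pos : 0 < em := by
      rw [hem, Finset.lt_inf'_iff]
      exact fun i _ => he i
    set ε₁ := min (η/4) em with hε₁
    have hε₁pos : 0 < ε₁ := lt_min (by linarith) hem_pos
    obtain ⟨T, hT1, hT2⟩ := hocta n f ε₁ hε₁pos hf
    have hu : ∀ i, ∃ u : E, ‖u‖ ≤ 1 ∧ 2 - ε₁ < (f i + T) u := by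
      intro i
      obtain ⟨u, hu1, hu2⟩ := (f i + T).exists_lt_apply_of_lt_opNorm (hT2 i).1
      rcases le_or_gt 0 ((f i + T) u) with h | h
      · exact ⟨u, hu1.le, by rwa [Real.norm_eq_abs, abs_of_nonneg h] at hu2⟩
      · refine ⟨-u, by simpa using hu1.le, ?_⟩
        rw [map_neg]
        rwa [Real.norm_eq_abs, abs_of_neg h] at hu2
    have hv : ∀ i, ∃ v : E, ‖v‖ ≤ 1 ∧ 2 - ε₁ < (f i - T) v := by
      intro i
      obtain ⟨v, hv1, hv2⟩ := (f i - T).exists_lt_apply_of_lt_opNorm (hT2 i).2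
      rcases le_or_gt 0 ((f i - T) v) with h | h
      · exact ⟨v, hv1.le, by rwa [Real.norm_eq_abs, abs_of_nonneg h] at hv2⟩
      · refine ⟨-v, by simpa using hv1.le, ?_⟩
        rw [map_neg]
        rwa [Real.norm_eq_abs, abs_of_neg h] at hv2
    choose u hu1 hu2 using hu
    choose v hv1 hv2 using hv
    have hεe : ∀ i, ε₁ ≤ e i := fun i =>
      le_trans (min_le_right _ _) (Finset.inf'_le e (Finset.mem_univ i))
    have hTu : ∀ i, T (u i) ≤ 1 := by
      intro i
      have h1 := habs T (u i)
      have h2 := le_abs_self (T (u i))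
      nlinarith [norm_nonneg T, norm_nonneg (u i), hu1 i]
    have hfu_le : ∀ i, f i (u i) ≤ 1 := by
      intro i
      have h1 := habs (f i) (u i)
      have h2 := le_abs_self (f i (u i))
      rw [hf i] at h1
      nlinarith [hu1 i]
    have hfv_le : ∀ i, f i (v i) ≤ 1 := by
      intro i
      have h1 := habs (f i) (v i)
      have h2 := le_abs_self (f i (v i))
      rw [hf i] at h1
      nlinarith [hv1 i]
    have happu : ∀ i, (f i + T) (u i) = f i (u i) + T (u i) := fun i => rfl
    have happv : ∀ i, (f i - T) (v i) = f i (v i) - T (v i) := fun i => rfl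
    have hfu : ∀ i, 1 - e i < f i (u i) := by
      intro i
      have h3 := hu2 i
      rw [happu i] at h3
      have h4 := hεe i
      linarith [hTu i]
    have hfv : ∀ i, 1 - e i < f i (v i) := by
      intro i
      have h3 := hv2 i
      rw [happv i] at h3
      have h4 := hεe i
      have h5 : -(T (v i)) ≤ 1 := by
        have h6 := habs T (v i)
        have h7 := neg_le_abs (T (v i))
        nlinarith [norm_nonneg T, norm_nonneg (v i), hv1 i]
      linarith
    have hTu_ge : ∀ i, 1 - ε₁ < T (u i) := by
      intro i
      have h3 := hu2 i
      rw [happu i] at h3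
      linarith [hfu_le i]
    have hTv_le : ∀ i, T (v i) < -(1 - ε₁) := by
      intro i
      have h3 := hv2 i
      rw [happv i] at h3
      linarith [hfv_le i]
    have hz1D : (∑ i, l i • u i) ∈ D := ⟨u, fun i => ⟨hu1 i, hfu i⟩, rfl⟩
    have hz2D : (∑ i, l i • v i) ∈ D := ⟨v, fun i => ⟨hv1 i, hfv i⟩, rfl⟩
    have hdiff : 2 - 2*ε₁ ≤ T (∑ i, l i • u i) - T (∑ i, l i • v i) := by
      rw [map_sum, map_sum, ← Finset.sum_sub_distrib]
      have h8 : ∀ i : Fin n, l i * (2 - 2*ε₁) ≤ T (l i • u i) - T (l i • v i) := by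
        intro i
        rw [map_smul, map_smul, smul_eq_mul, smul_eq_mul, ← mul_sub]
        exact mul_le_mul_of_nonneg_left (by linarith [hTu_ge i, hTv_le i]) (hl i)
      calc 2 - 2*ε₁ = ∑ i, l i * (2 - 2*ε₁) := by
            rw [← Finset.sum_mul, hsum, one_mul]
        _ ≤ ∑ i, (T (l i • u i) - T (l i • v i)) := Finset.sum_le_sum (fun i _ => h8 i)
    have hnormdiff : 2 - 2*ε₁ ≤ ‖(∑ i, l i • u i) - (∑ i, l i • v i)‖ := by
      have h9 : T ((∑ i, l i • u i) - (∑ i, l i • v i)) ≤ ‖(∑ i, l i • u i) - (∑ i, l i • v i)‖ := by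
        have h10 := habs T ((∑ i, l i • u i) - (∑ i, l i • v i))
        have h11 := le_abs_self (T ((∑ i, l i • u i) - (∑ i, l i • v i)))
        nlinarith [norm_nonneg ((∑ i, l i • u i) - (∑ i, l i • v i)), norm_nonneg T,
          hT1, norm_nonneg ((∑ i, l i • u i) - (∑ i, l i • v i))]
      rw [map_sub] at h9
      linarith
    have hdist := Metric.dist_le_diam_of_mem hDbdd hz1D hz2D
    rw [dist_eq_norm] at hdist
    have h12 : ε₁ ≤ η/4 := min_le_left _ _
    linarith

end MIdealProof

/-- If `Y` is a proper M-ideal in a real Banach space `X`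
(witnessed by an L-projection `P` on `X*` with range `Y^⊥` and kernel `Z`)
and the kernel `Z` is a norming subspace of `X*`, then both `X` and `Y`
have the strong diameter two property. -/
theorem m_ideal_norming_kernel_sd2p
    {X : Type*} [NormedAddCommGroup X] [NormedSpace ℝ X] [CompleteSpace X]
    (Y : Subspace ℝ X) (hYc : IsClosed (Y : Set X)) (hproper : Y ≠ ⊤)
    (P : StrongDual ℝ X →L[ℝ] StrongDual ℝ X)
    (hproj : ∀ F, P (P F) = P F)
    (hrange : Set.range (fun F => P F) = {F : StrongDual ℝ X | ∀ y ∈ Y, F y = 0})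
    (hnorm : ∀ F, ‖F‖ = ‖P F‖ + ‖F - P F‖)
    (hnorming : ∀ x : X,
      ‖x‖ = sSup {r : ℝ | ∃ F : StrongDual ℝ X, P F = 0 ∧ ‖F‖ ≤ 1 ∧ r = |F x|}) :
    HasSD2P X ∧ HasSD2P Y := by
  classical
  constructor
  · -- X has SD2P
    apply octa_sd2p
    intro n f ε hε hf
    set g : Fin n × Bool → StrongDual ℝ X := fun p =>
      if p.2 then f p.1 - P (f p.1) else -(f p.1 - P (f p.1)) with hgdef
    have hg0 : ∀ p, P (g p) = 0 := by
      intro p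
      rw [hgdef]
      dsimp only
      split_ifs
      · rw [map_sub, hproj, sub_self]
      · rw [map_neg, map_sub, hproj, sub_self, neg_zero]
    have hg1 : ∀ p, ‖g p‖ ≤ 1 := by
      intro p
      have h1 := hnorm (f p.1)
      have h2 := norm_nonneg (P (f p.1))
      rw [hf p.1] at h1
      rw [hgdef]
      dsimp only
      split_ifs
      · linarith
      · rw [norm_neg]; linarith
    obtain ⟨T, hT0, hT1, hT2⟩ := octaZ hYc hproper hproj hrange hnorm hnorming g hg0 hg1
      (ε := ε/2) (by linarith)
    refine ⟨T, hT1, fun i => ?_⟩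
    constructor
    · have h3 : ‖f i + T‖ = ‖P (f i)‖ + ‖g (i, true) + T‖ := by
        have h4 : P (f i + T) = P (f i) := by rw [map_add, hT0, add_zero]
        have h5 : (f i + T) - P (f i) = g (i, true) + T := by
          rw [show g (i, true) = f i - P (f i) from rfl]
          abel
        rw [hnorm (f i + T), h4, h5]
      have h6 := hT2 (i, true)
      have h7 : ‖g (i, true)‖ = ‖f i - P (f i)‖ := rfl
      have h8 : ‖f i‖ = ‖P (f i)‖ + ‖f i - P (f i)‖ := hnorm (f i)
      rw [hf i] at h8
      rw [h3]
      rw [h7] at h6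
      linarith
    · have h3 : ‖f i - T‖ = ‖P (f i)‖ + ‖g (i, false) + T‖ := by
        have h4 : P (f i - T) = P (f i) := by rw [map_sub, hT0, sub_zero]
        have h5 : (f i - T) - P (f i) = -(g (i, false) + T) := by
          rw [show g (i, false) = -(f i - P (f i)) from rfl]
          abel
        rw [hnorm (f i - T), h4, h5, norm_neg]
      have h6 := hT2 (i, false)
      have h7 : ‖g (i, false)‖ = ‖f i - P (f i)‖ := by
        rw [show g (i, false) = -(f i - P (f i)) from rfl, norm_neg]
      have h8 : ‖f i‖ = ‖P (f i)‖ + ‖f i - P (f i)‖ := hnorm (f i)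
      rw [hf i] at h8
      rw [h3]
      rw [h7] at h6
      linarith
  · -- Y has SD2P
    apply octa_sd2p
    intro n ft ε hε hft
    have hlift : ∀ i : Fin n, ∃ gY : StrongDual ℝ X, P gY = 0 ∧ gY.comp Y.subtypeL = ft i := by
      intro i
      obtain ⟨f', hfa, hfn⟩ := exists_extension_norm_eq Y (ft i)
      refine ⟨f' - P f', ?_, ?_⟩
      · rw [map_sub, hproj, sub_self]
      · ext z
        have h9 : P (P f') = P f' := hproj f'
        have h10 : ∀ y ∈ Y, (P f') y = 0 := (mem_ann_iff hproj hrange (P f')).2 h9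
        have h11 : (f' - P f') (z : X) = f' (z : X) - (P f') (z : X) := rfl
        show (f' - P f') (z : X) = ft i z
        rw [h11, h10 (z : X) z.2, sub_zero]
        exact hfa z
    choose gY hgY0 hgYres using hlift
    have hgYnorm : ∀ i, ‖gY i‖ = 1 := by
      intro i
      rw [← res_norm_eq hproj hrange hnorm (hgY0 i), hgYres i]
      exact hft i
    set g : Fin n × Bool → StrongDual ℝ X := fun p => if p.2 then gY p.1 else -(gY p.1) with hgdef
    have hg0 : ∀ p, P (g p) = 0 := by
      intro p
      rw [hgdef]
      dsimp only
      split_ifs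
      · exact hgY0 p.1
      · rw [map_neg, hgY0 p.1, neg_zero]
    have hg1 : ∀ p, ‖g p‖ ≤ 1 := by
      intro p
      rw [hgdef]
      dsimp only
      split_ifs
      · exact (hgYnorm p.1).le
      · rw [norm_neg]; exact (hgYnorm p.1).le
    obtain ⟨T, hT0, hT1, hT2⟩ := octaZ hYc hproper hproj hrange hnorm hnorming g hg0 hg1
      (ε := ε/2) (by linarith)
    refine ⟨T.comp Y.subtypeL, le_trans (res_norm_le Y T) hT1, fun i => ?_⟩
    constructor
    · have h12 : ft i + T.comp Y.subtypeL = (gY i + T).comp Y.subtypeL := by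
        ext z
        show ft i z + T (z : X) = (gY i + T) (z : X)
        have := DFunLike.congr_fun (hgYres i) z
        show ft i z + T (z : X) = gY i (z : X) + T (z : X)
        rw [← this]
        rfl
      have h13 : ‖(gY i + T).comp Y.subtypeL‖ = ‖gY i + T‖ :=
        res_norm_eq hproj hrange hnorm (by rw [map_add, hgY0 i, hT0, add_zero])
      have h14 := hT2 (i, true)
      have h15 : g (i, true) = gY i := rfl
      rw [h15, hgYnorm i] at h14
      rw [h12, h13]
      linarith
    · have h12 : ft i - T.comp Y.subtypeL = (-(g (i, false) + T)).comp Y.subtypeL := by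
        ext z
        have h16 : g (i, false) = -(gY i) := rfl
        show ft i z - T (z : X) = (-(g (i, false) + T)) (z : X)
        rw [h16]
        have := DFunLike.congr_fun (hgYres i) z
        show ft i z - T (z : X) = -((-(gY i) + T) (z : X))
        have h17 : (-(gY i) + T) (z : X) = -(gY i (z : X)) + T (z : X) := rfl
        have h18 : gY i (z : X) = ft i z := this
        rw [h17, h18]
        ring
      have h13 : ‖(-(g (i, false) + T)).comp Y.subtypeL‖ = ‖-(g (i, false) + T)‖ := by
        refine res_norm_eq hproj hrange hnorm ?_
        rw [map_neg, map_add, hg0 (i, false), hT0, add_zero, neg_zero]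
      have h14 := hT2 (i, false)
      have h15 : ‖g (i, false)‖ = 1 := by
        rw [show g (i, false) = -(gY i) from rfl, norm_neg]
        exact hgYnorm i
      rw [h15] at h14
      rw [h12, h13, norm_neg]
      linarith
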